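/- Let p > 1 and let g : (0,∞) → (0,∞) be a nondecreasing function satisfying g(w)/g(v) ≥ (w/v)^(p−1) for all w ≥ v > 0. Then for every ε ∈ (0,1] and all a > 0, b > 0 one has g(a)·b ≤ ε⁻¹·g(a)·a + ε^(p−1)·g(b)·b. -/

import Mathlib

/-- Young-type inequality for a nondecreasing function `g : (0,∞) → (0,∞)`
satisfying the coercivity condition (g₂): `g(w)/g(v) ≥ (w/v)^(p−1)` for `w ≥ v > 0`.
Then for every `ε ∈ (0,1]` and `a, b > 0`, `g(a)·b ≤ ε⁻¹·g(a)·a + ε^(p−1)·g(b)·b`. -/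
theorem young_type_inequality_two
    (p : ℝ) (hp : 1 < p)
    (g : ℝ → ℝ)
    (hg_pos : ∀ v, 0 < v → 0 < g v)
    (hg_mono : MonotoneOn g (Set.Ioi 0))
    (hg2 : ∀ v w : ℝ, 0 < v → v ≤ w → (w / v) ^ (p - 1) ≤ g w / g v) :
    ∀ ε : ℝ, 0 < ε → ε ≤ 1 → ∀ a > (0:ℝ), ∀ b > (0:ℝ),
      g a * b ≤ ε⁻¹ * g a * a + ε ^ (p - 1) * g b * b := by
  intro ε hε hε1 a ha b hb
  have hεp : (0:ℝ) < ε ^ (p - 1) := Real.rpow_pos_of_pos hε _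
  by_cases hcase : b ≤ ε⁻¹ * a
  · have h1 : g a * b ≤ ε⁻¹ * g a * a := by
      calc g a * b ≤ g a * (ε⁻¹ * a) :=
        mul_le_mul_of_nonneg_left hcase (le_of_lt (hg_pos a ha))
      _ = ε⁻¹ * g a * a := by ring
    have h2 : 0 ≤ ε ^ (p - 1) * g b * b :=
      le_of_lt (mul_pos (mul_pos hεp (hg_pos b hb)) hb)
    linarith
  · push_neg at hcase
    have hεb : 0 < ε * b := mul_pos hε hb
    have haεb : a ≤ ε * b := by
      nlinarith [mul_inv_cancel₀ hε.ne', mul_lt_mul_of_pos_left hcase hε]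
    have hεbb : ε * b ≤ b := by nlinarith
    have h1 : g a ≤ g (ε * b) := hg_mono ha hεb haεb
    have h2 : (b / (ε * b)) ^ (p - 1) ≤ g b / g (ε * b) := hg2 _ _ hεb hεbb
    have hbe : b / (ε * b) = ε⁻¹ := by field_simp
    rw [hbe] at h2
    have hinv : (ε⁻¹ : ℝ) ^ (p - 1) = (ε ^ (p - 1))⁻¹ := Real.inv_rpow hε.le _
    rw [hinv] at h2
    have hgεb : 0 < g (ε * b) := hg_pos _ hεb
    have h3 : g (ε * b) ≤ ε ^ (p - 1) * g b := by
      rw [le_div_iff₀ hgεb] at h2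
      nlinarith [mul_inv_cancel₀ hεp.ne', h2, hεp]
    have h4 : g a * b ≤ ε ^ (p - 1) * g b * b := by
      nlinarith [h1, h3, hb]
    have h5 : 0 ≤ ε⁻¹ * g a * a :=
      le_of_lt (mul_pos (mul_pos (inv_pos.mpr hε) (hg_pos a ha)) ha)
    linarith
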